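/- For every multiindex γ = (γ₁,γ₂,γ₃) ∈ ℕⁿ×ℕⁿ×ℕ with γ ≠ 0 there exist real constants c_{αβ}, indexed by pairs of multiindices (α,β) with d(α)+d(β) = d(γ) and 0 < d(α) < d(γ), such that for all Schwartz functions f, g on ℝ^{2n+1}: T^γ(f *₁ g) = T^γf *₁ g + f *₁ T^γg + Σ_{d(α)+d(β)=d(γ), 0<d(α)<d(γ)} c_{αβ} T^αf *₁ T^βg. -/

import Mathlib

open MeasureTheory Complex Topology Filter
open scoped RealInnerProductSpace ENNReal

noncomputable section

/-- `ℝⁿ` as a Euclidean space. -/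
abbrev E (n : ℕ) := EuclideanSpace ℝ (Fin n)

/-- The underlying space `ℝⁿ × ℝⁿ × ℝ` of the Heisenberg group `𝕙ⁿ`. -/
abbrev H (n : ℕ) := E n × E n × ℝ

/-- Heisenberg multiplication. -/
def hmul {n : ℕ} (u v : H n) : H n :=
  (u.1 + v.1, u.2.1 + v.2.1, u.2.2 + v.2.2 + ⟪u.1, v.2.1⟫)

/-- Heisenberg inverse. -/
def hinv {n : ℕ} (u : H n) : H n := (-u.1, -u.2.1, -u.2.2 + ⟪u.1, u.2.1⟫)

/-- Heisenberg convolution `(F *₁ G)(u) = ∫ F(u ∘ v⁻¹) G(v) dv`. -/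
def conv1 {n : ℕ} (F G : H n → ℂ) (u : H n) : ℂ := ∫ v, F (hmul u (hinv v)) * G v

/-- Multiindices `γ = (γ₁, γ₂, γ₃) ∈ ℕⁿ × ℕⁿ × ℕ`. -/
abbrev MIdx (n : ℕ) := (Fin n → ℕ) × (Fin n → ℕ) × ℕ

/-- Homogeneous length `d(γ) = |γ₁| + |γ₂| + 2γ₃`. -/
def hd {n : ℕ} (γ : MIdx n) : ℕ := (∑ j, γ.1 j) + (∑ j, γ.2.1 j) + 2 * γ.2.2

/-- The monomial `u₁^{γ₁} u₂^{γ₂} u₃^{γ₃}`. -/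
def mono {n : ℕ} (γ : MIdx n) (u : H n) : ℝ :=
  (∏ j, u.1 j ^ γ.1 j) * (∏ j, u.2.1 j ^ γ.2.1 j) * u.2.2 ^ γ.2.2

namespace St3

variable {n : ℕ}

lemma mono_add (a b : MIdx n) (u : H n) : mono (a + b) u = mono a u * mono b u := by
  simp only [mono, Prod.fst_add, Prod.snd_add, Pi.add_apply, pow_add,
    Finset.prod_mul_distrib]
  ring

lemma hd_add (a b : MIdx n) : hd (a + b) = hd a + hd b := by
  simp only [hd, Prod.fst_add, Prod.snd_add, Pi.add_apply, Finset.sum_add_distrib]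
  ring

lemma mono_zero_idx (u : H n) : mono (0 : MIdx n) u = 1 := by simp [mono]

lemma hd_eq_zero {a : MIdx n} (h : hd a = 0) : a = 0 := by
  simp only [hd, Nat.add_eq_zero, Finset.sum_eq_zero_iff, Finset.mem_univ, true_implies,
    mul_eq_zero, OfNat.ofNat_ne_zero, false_or] at h
  obtain ⟨⟨h1, h2⟩, h3⟩ := h
  refine Prod.ext (funext h1) (Prod.ext (funext h2) h3)

/-- total weight -/
def tw (a : MIdx n) : ℕ := (∑ j, a.1 j) + (∑ j, a.2.1 j) + a.2.2

lemma tw_add (a b : MIdx n) : tw (a + b) = tw a + tw b := by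
  simp only [tw, Prod.fst_add, Prod.snd_add, Pi.add_apply, Finset.sum_add_distrib]
  ring

lemma tw_eq_zero {a : MIdx n} (h : tw a = 0) : a = 0 := by
  simp only [tw, Nat.add_eq_zero, Finset.sum_eq_zero_iff, Finset.mem_univ, true_implies] at h
  obtain ⟨⟨h1, h2⟩, h3⟩ := h
  refine Prod.ext (funext h1) (Prod.ext (funext h2) h3)

lemma mono_at_zero {a : MIdx n} (h : a ≠ 0) : mono a (0 : H n) = 0 := by
  have hcase : a.1 ≠ 0 ∨ a.2.1 ≠ 0 ∨ a.2.2 ≠ 0 := by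
    by_contra hc
    push_neg at hc
    exact h (Prod.ext hc.1 (Prod.ext hc.2.1 hc.2.2))
  have heq : mono a (0 : H n)
      = (∏ j, (0:ℝ) ^ a.1 j) * (∏ j, (0:ℝ) ^ a.2.1 j) * (0:ℝ) ^ a.2.2 := rfl
  rw [heq]
  rcases hcase with h1 | h2 | h3
  · obtain ⟨j, hj⟩ := Function.ne_iff.mp h1
    rw [Finset.prod_eq_zero (Finset.mem_univ j) (zero_pow (by simpa using hj))]
    ring
  · obtain ⟨j, hj⟩ := Function.ne_iff.mp h2
    rw [Finset.prod_eq_zero (f := fun j => (0:ℝ) ^ a.2.1 j) (Finset.mem_univ j)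
      (zero_pow (by simpa using hj))]
    ring
  · rw [zero_pow h3]
    ring

lemma hmul_zero_left (v : H n) : hmul 0 v = v := by
  simp [hmul, Prod.ext_iff]

lemma hmul_zero_right (w : H n) : hmul w 0 = w := by
  simp only [hmul]
  refine Prod.ext (by simp) (Prod.ext (by simp) ?_)
  show w.2.2 + (0:ℝ) + ⟪w.1, (0 : E n)⟫ = w.2.2
  simp

/-- unit multiindices -/
def e1 (j : Fin n) : MIdx n := (Pi.single j 1, 0, 0)
def e2 (j : Fin n) : MIdx n := (0, Pi.single j 1, 0)
def e3 : MIdx n := (0, 0, 1)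

lemma tw_e1 (j : Fin n) : tw (e1 j) = 1 := by simp [tw, e1]
lemma tw_e2 (j : Fin n) : tw (e2 j) = 1 := by simp [tw, e2]
lemma tw_e3 : tw (e3 : MIdx n) = 1 := by simp [tw, e3]

lemma prod_pow_single (x : Fin n → ℝ) (j : Fin n) :
    (∏ i, x i ^ (Pi.single j 1 : Fin n → ℕ) i) = x j := by
  rw [Finset.prod_eq_single j]
  · simp
  · intro i _ hij
    simp [Pi.single_apply, hij]
  · simp

lemma mono_e1 (j : Fin n) (u : H n) : mono (e1 j) u = u.1 j := by
  simp [mono, e1, prod_pow_single]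
lemma mono_e2 (j : Fin n) (u : H n) : mono (e2 j) u = u.2.1 j := by
  simp [mono, e2, prod_pow_single]
lemma mono_e3 (u : H n) : mono (e3 : MIdx n) u = u.2.2 := by
  simp [mono, e3]

/-- representation predicate -/
def Rep (γ : MIdx n) : Prop :=
  ∃ (ι : Type) (_ : Fintype ι) (idx : ι → MIdx n × MIdx n) (c : ι → ℝ),
    (∀ i, hd (idx i).1 + hd (idx i).2 = hd γ) ∧
    ∀ w v : H n, mono γ (hmul w v) = ∑ i, c i * mono (idx i).1 w * mono (idx i).2 v

lemma rep_zero : Rep (0 : MIdx n) := by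
  refine ⟨PUnit, inferInstance, fun _ => (0, 0), fun _ => 1, ?_, ?_⟩
  · intro i; simp [hd]
  · intro w v; simp [mono_zero_idx]

lemma rep_e1 (j : Fin n) : Rep (e1 j) := by
  refine ⟨Bool, inferInstance, fun b => cond b (e1 j, 0) (0, e1 j),
    fun _ => 1, ?_, ?_⟩
  · intro i; cases i <;> simp [hd, e1]
  · intro w v
    rw [Fintype.sum_bool]
    show mono (e1 j) (hmul w v)
      = 1 * mono (e1 j) w * mono 0 v + 1 * mono 0 w * mono (e1 j) v
    simp [mono_e1, mono_zero_idx, hmul]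

lemma rep_e2 (j : Fin n) : Rep (e2 j) := by
  refine ⟨Bool, inferInstance, fun b => cond b (e2 j, 0) (0, e2 j),
    fun _ => 1, ?_, ?_⟩
  · intro i; cases i <;> simp [hd, e2]
  · intro w v
    rw [Fintype.sum_bool]
    show mono (e2 j) (hmul w v)
      = 1 * mono (e2 j) w * mono 0 v + 1 * mono 0 w * mono (e2 j) v
    simp [mono_e2, mono_zero_idx, hmul]

lemma rep_e3 : Rep (e3 : MIdx n) := by
  refine ⟨Fin n ⊕ Bool, inferInstance,
    fun i => Sum.casesOn i (fun j => (e1 j, e2 j))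
      (fun b => cond b ((e3 : MIdx n), 0) (0, (e3 : MIdx n))),
    fun _ => 1, ?_, ?_⟩
  · rintro (j | b)
    · simp [hd, e1, e2, e3]
    · cases b <;> simp [hd, e3]
  · intro w v
    rw [Fintype.sum_sum_type, Fintype.sum_bool]
    show mono e3 (hmul w v)
      = (∑ j, 1 * mono (e1 j) w * mono (e2 j) v)
        + (1 * mono e3 w * mono 0 v + 1 * mono 0 w * mono e3 v)
    have hinner : ⟪w.1, v.2.1⟫ = ∑ j, w.1 j * v.2.1 j := by
      simp [PiLp.inner_apply, RCLike.inner_apply, conj_trivial]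
      exact Finset.sum_congr rfl fun _ _ => mul_comm _ _
    simp only [mono_e1, mono_e2, mono_e3, mono_zero_idx, one_mul, mul_one]
    show (hmul w v).2.2 = _
    simp only [hmul, hinner]
    ring

lemma rep_add {a b : MIdx n} (ha : Rep a) (hb : Rep b) : Rep (a + b) := by
  obtain ⟨ι₁, _, idx₁, c₁, h₁, key₁⟩ := ha
  obtain ⟨ι₂, _, idx₂, c₂, h₂, key₂⟩ := hb
  refine ⟨ι₁ × ι₂, inferInstance,
    fun p => ((idx₁ p.1).1 + (idx₂ p.2).1, (idx₁ p.1).2 + (idx₂ p.2).2),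
    fun p => c₁ p.1 * c₂ p.2, ?_, ?_⟩
  · intro i
    have ha := h₁ i.1; have hb := h₂ i.2
    simp only [hd_add]
    omega
  · intro w v
    rw [mono_add, key₁ w v, key₂ w v, Finset.sum_mul_sum]
    rw [Fintype.sum_prod_type]
    refine Finset.sum_congr rfl fun i _ => Finset.sum_congr rfl fun j _ => ?_
    simp only [mono_add]
    ring

lemma rep_all (γ : MIdx n) : Rep γ := by
  generalize hk : tw γ = k
  induction k generalizing γ with
  | zero => rw [tw_eq_zero hk]; exact rep_zero
  | succ k ih =>
    by_cases h3 : γ.2.2 ≠ 0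
    · have hdecomp : γ = (γ.1, γ.2.1, γ.2.2 - 1) + e3 := by
        refine Prod.ext (by simp [e3]) (Prod.ext (by simp [e3]) ?_)
        show γ.2.2 = (γ.2.2 - 1) + 1
        omega
      rw [hdecomp]
      refine rep_add (ih _ ?_) rep_e3
      rw [hdecomp, tw_add, tw_e3] at hk
      omega
    · push_neg at h3
      by_cases h1 : γ.1 ≠ 0
      · obtain ⟨j, hj⟩ := Function.ne_iff.mp h1
        have hj' : γ.1 j ≠ 0 := by simpa using hj
        have hdecomp : γ = (Function.update γ.1 j (γ.1 j - 1), γ.2.1, γ.2.2) + e1 j := by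
          refine Prod.ext ?_ (by simp [e1])
          funext i
          show γ.1 i = Function.update γ.1 j (γ.1 j - 1) i + (Pi.single j 1 : Fin n → ℕ) i
          by_cases hij : i = j
          · subst hij
            simp only [Function.update_self, Pi.single_eq_same]
            omega
          · simp [Function.update_of_ne hij, Pi.single_apply, hij]
        rw [hdecomp]
        refine rep_add (ih _ ?_) (rep_e1 j)
        rw [hdecomp, tw_add, tw_e1] at hk
        omega
      · push_neg at h1
        by_cases h2 : γ.2.1 ≠ 0
        · obtain ⟨j, hj⟩ := Function.ne_iff.mp h2
          have hj' : γ.2.1 j ≠ 0 := by simpa using hj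
          have hdecomp : γ = (γ.1, Function.update γ.2.1 j (γ.2.1 j - 1), γ.2.2) + e2 j := by
            refine Prod.ext (by simp [e2]) (Prod.ext ?_ (by simp [e2]))
            funext i
            show γ.2.1 i
              = Function.update γ.2.1 j (γ.2.1 j - 1) i + (Pi.single j 1 : Fin n → ℕ) i
            by_cases hij : i = j
            · subst hij
              simp only [Function.update_self, Pi.single_eq_same]
              omega
            · simp [Function.update_of_ne hij, Pi.single_apply, hij]
          rw [hdecomp]
          refine rep_add (ih _ ?_) (rep_e2 j)
          rw [hdecomp, tw_add, tw_e2] at hk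
          omega
        · push_neg at h2
          exfalso
          have hγ0 : γ = 0 := Prod.ext h1 (Prod.ext h2 h3)
          have htw : tw (0 : MIdx n) = 0 := by simp [tw]
          rw [hγ0, htw] at hk
          omega


lemma key (γ : MIdx n) (hγ : γ ≠ 0) :
    ∃ (s : Finset (MIdx n × MIdx n)) (c : MIdx n × MIdx n → ℝ),
      (∀ p ∈ s, hd p.1 + hd p.2 = hd γ ∧ 0 < hd p.1 ∧ hd p.1 < hd γ) ∧
      ∀ w v : H n, mono γ (hmul w v)
        = mono γ w + mono γ v + ∑ p ∈ s, c p * mono p.1 w * mono p.2 v := by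
  classical
  have hdγ : 0 < hd γ := by
    rcases Nat.eq_zero_or_pos (hd γ) with h | h
    · exact absurd (hd_eq_zero h) hγ
    · exact h
  obtain ⟨ι, _, idx, co, hcon, hkey⟩ := rep_all γ
  set P : ι → Prop := fun i => hd (idx i).1 = 0 with hP
  set Q : ι → Prop := fun i => hd (idx i).1 = hd γ with hQ
  set A : Finset ι := Finset.univ.filter P with hA
  set B : Finset ι := Finset.univ.filter Q with hB
  set M : Finset ι := Finset.univ.filter (fun i => ¬ P i ∧ ¬ Q i) with hM
  -- splitting of sums
  have hsplit : ∀ F : ι → ℝ, ∑ i, F i = (∑ i ∈ A, F i) + (∑ i ∈ B, F i) + ∑ i ∈ M, F i := by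
    intro F
    rw [← Finset.sum_filter_add_sum_filter_not Finset.univ P F]
    rw [← Finset.sum_filter_add_sum_filter_not (Finset.univ.filter (fun i => ¬ P i)) Q F]
    rw [Finset.filter_filter, Finset.filter_filter]
    have e1 : Finset.univ.filter (fun i => ¬ P i ∧ Q i) = B := by
      apply Finset.filter_congr
      intro i _
      simp only [hP, hQ]
      constructor
      · exact fun h => h.2
      · intro h; exact ⟨by omega, h⟩
    rw [e1]
    ring
  -- A-sum
  have claimA : ∀ w v : H n,
      (∑ i ∈ A, co i * mono (idx i).1 w * mono (idx i).2 v) = mono γ v := by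
    intro w v
    have h1 : ∀ i ∈ A, co i * mono (idx i).1 w * mono (idx i).2 v
        = co i * mono (idx i).1 (0 : H n) * mono (idx i).2 v := by
      intro i hi
      have : (idx i).1 = 0 := hd_eq_zero (by simpa [hA, hP] using hi)
      rw [this, mono_zero_idx, mono_zero_idx]
    rw [Finset.sum_congr rfl h1]
    have h2 : (∑ i ∈ A, co i * mono (idx i).1 (0 : H n) * mono (idx i).2 v)
        = ∑ i, co i * mono (idx i).1 (0 : H n) * mono (idx i).2 v := by
      apply Finset.sum_subset (Finset.subset_univ A)
      intro i _ hi
      have hne : (idx i).1 ≠ 0 := by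
        intro h0
        exact hi (by simp [hA, hP, h0, hd])
      rw [mono_at_zero hne]
      ring
    rw [h2, ← hkey 0 v, hmul_zero_left]
  -- B-sum
  have claimB : ∀ w v : H n,
      (∑ i ∈ B, co i * mono (idx i).1 w * mono (idx i).2 v) = mono γ w := by
    intro w v
    have h1 : ∀ i ∈ B, co i * mono (idx i).1 w * mono (idx i).2 v
        = co i * mono (idx i).1 w * mono (idx i).2 (0 : H n) := by
      intro i hi
      have hq : hd (idx i).1 = hd γ := by simpa [hB, hQ] using hi
      have : (idx i).2 = 0 := hd_eq_zero (by have := hcon i; omega)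
      rw [this, mono_zero_idx, mono_zero_idx]
    rw [Finset.sum_congr rfl h1]
    have h2 : (∑ i ∈ B, co i * mono (idx i).1 w * mono (idx i).2 (0 : H n))
        = ∑ i, co i * mono (idx i).1 w * mono (idx i).2 (0 : H n) := by
      apply Finset.sum_subset (Finset.subset_univ B)
      intro i _ hi
      have hq : hd (idx i).1 ≠ hd γ := by
        intro h0
        exact hi (by simp [hB, hQ, h0])
      have hne : (idx i).2 ≠ 0 := by
        intro h0
        have hci := hcon i
        have hzero : hd (0 : MIdx n) = 0 := by simp [hd]
        rw [h0, hzero] at hci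
        omega
      rw [mono_at_zero hne]
      ring
    rw [h2, ← hkey w 0, hmul_zero_right]
  refine ⟨M.image idx, fun p => ∑ i ∈ M.filter (fun i => idx i = p), co i, ?_, ?_⟩
  · intro p hp
    obtain ⟨i, hi, hip⟩ := Finset.mem_image.mp hp
    have hiM : ¬ P i ∧ ¬ Q i := by simpa [hM] using hi
    have hci := hcon i
    rw [← hip]
    refine ⟨hci, ?_, ?_⟩
    · have := hiM.1; simp only [hP] at this; omega
    · have := hiM.2; simp only [hQ] at this; omega
  · intro w v
    rw [hkey w v, hsplit, claimA, claimB]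
    have hfib : ∑ p ∈ M.image idx,
        ((∑ i ∈ M.filter (fun i => idx i = p), co i) * mono p.1 w * mono p.2 v)
        = ∑ i ∈ M, co i * mono (idx i).1 w * mono (idx i).2 v := by
      rw [← Finset.sum_fiberwise_of_maps_to (g := idx) (t := M.image idx)
        (fun i hi => Finset.mem_image_of_mem idx hi)
        (fun i => co i * mono (idx i).1 w * mono (idx i).2 v)]
      refine Finset.sum_congr rfl fun p _ => ?_
      rw [Finset.sum_mul, Finset.sum_mul]
      refine Finset.sum_congr rfl fun i hi => ?_
      have : idx i = p := (Finset.mem_filter.mp hi).2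
      rw [this]
    rw [hfib]
    ring

instance (n : ℕ) : (volume : Measure (H n)).IsAddHaarMeasure := by
  have h : (volume : Measure (H n))
      = ((volume : Measure (E n)).prod
          (((volume : Measure (E n)).prod (volume : Measure ℝ)))) := rfl
  rw [h]
  exact Measure.prod.instIsAddHaarMeasure _ _

lemma hmul_hinv_cancel (u v : H n) : hmul (hmul u (hinv v)) v = u := by
  simp only [hmul, hinv]
  refine Prod.ext (by simp) (Prod.ext (by simp) ?_)
  simp only [inner_add_left, inner_neg_left, inner_neg_right]
  ring_nf

lemma continuous_T (u : H n) : Continuous (fun v : H n => hmul u (hinv v)) := by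
  have h : (fun v : H n => hmul u (hinv v))
      = fun v : H n => (u.1 + -v.1, u.2.1 + -v.2.1,
          u.2.2 + (-v.2.2 + ⟪v.1, v.2.1⟫) + ⟪u.1, -v.2.1⟫) := rfl
  rw [h]
  refine Continuous.prodMk (by fun_prop) (Continuous.prodMk (by fun_prop) ?_)
  refine Continuous.add (Continuous.add continuous_const ?_) ?_
  · exact Continuous.add (by fun_prop)
      ((continuous_fst).inner (continuous_fst.comp continuous_snd))
  · exact continuous_const.inner (by fun_prop)

lemma continuous_mono (a : MIdx n) : Continuous (fun x : H n => mono a x) := by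
  unfold mono
  fun_prop

lemma coord_le_norm (x : E n) (j : Fin n) : |x j| ≤ ‖x‖ := by
  rw [EuclideanSpace.norm_eq]
  have h1 : |x j| = Real.sqrt (‖x j‖ ^ 2) := by
    rw [Real.sqrt_sq_eq_abs]
    simp [Real.norm_eq_abs]
  rw [h1]
  apply Real.sqrt_le_sqrt
  exact Finset.single_le_sum (f := fun i => ‖x i‖ ^ 2)
    (fun i _ => sq_nonneg _) (Finset.mem_univ j)

lemma abs_mono_le (a : MIdx n) (x : H n) : |mono a x| ≤ ‖x‖ ^ tw a := by
  have h1 : ∀ j, |x.1 j| ≤ ‖x‖ := fun j => (coord_le_norm x.1 j).trans (norm_fst_le x)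
  have h2 : ∀ j, |x.2.1 j| ≤ ‖x‖ := fun j =>
    (coord_le_norm x.2.1 j).trans ((norm_fst_le x.2).trans (norm_snd_le x))
  have h3 : |x.2.2| ≤ ‖x‖ := by
    have : |x.2.2| = ‖x.2.2‖ := (Real.norm_eq_abs _).symm
    rw [this]
    exact (norm_snd_le x.2).trans (norm_snd_le x)
  have habs : |mono a x|
      = (∏ j, |x.1 j| ^ a.1 j) * (∏ j, |x.2.1 j| ^ a.2.1 j) * |x.2.2| ^ a.2.2 := by
    simp [mono, abs_mul, Finset.abs_prod, abs_pow]
  rw [habs]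
  have hle : (∏ j, |x.1 j| ^ a.1 j) * (∏ j, |x.2.1 j| ^ a.2.1 j) * |x.2.2| ^ a.2.2
      ≤ (∏ j, ‖x‖ ^ a.1 j) * (∏ j, ‖x‖ ^ a.2.1 j) * ‖x‖ ^ a.2.2 := by
    gcongr with j hj j hj <;>
      first
        | exact abs_nonneg _
        | exact h1 _
        | exact h2 _
        | exact h3
        | positivity
  refine hle.trans ?_
  rw [Finset.prod_pow_eq_pow_sum, Finset.prod_pow_eq_pow_sum, ← pow_add, ← pow_add]
  exact le_of_eq rfl

lemma bounded_mono_mul (a : MIdx n) (f : SchwartzMap (H n) ℂ) :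
    ∃ C : ℝ, ∀ x : H n, ‖(mono a x : ℂ) * f x‖ ≤ C := by
  obtain ⟨C, hC0, hC⟩ := f.decay (tw a) 0
  refine ⟨C, fun x => ?_⟩
  rw [norm_mul, Complex.norm_real, Real.norm_eq_abs]
  have h1 : |mono a x| * ‖f x‖ ≤ ‖x‖ ^ tw a * ‖f x‖ :=
    mul_le_mul_of_nonneg_right (abs_mono_le a x) (norm_nonneg _)
  refine h1.trans ?_
  simpa using hC x

lemma integrable_mono_mul (b : MIdx n) (g : SchwartzMap (H n) ℂ) :
    Integrable (fun v : H n => (mono b v : ℂ) * g v) := by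
  refine (g.integrable_pow_mul volume (tw b)).mono' ?_ ?_
  · exact (Complex.continuous_ofReal.comp (continuous_mono b)).mul
      g.continuous |>.aestronglyMeasurable
  · filter_upwards with v
    rw [norm_mul, Complex.norm_real, Real.norm_eq_abs]
    exact mul_le_mul_of_nonneg_right (abs_mono_le b v) (norm_nonneg _)

lemma integrable_term (a b : MIdx n) (f g : SchwartzMap (H n) ℂ) (u : H n) :
    Integrable (fun v : H n =>
      ((mono a (hmul u (hinv v)) : ℂ) * f (hmul u (hinv v)))
        * ((mono b v : ℂ) * g v)) := by
  obtain ⟨C, hC⟩ := bounded_mono_mul a f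
  refine (integrable_mono_mul b g).bdd_mul ?_ (Filter.Eventually.of_forall fun v => hC _)
  have hcont : Continuous (fun x : H n => (mono a x : ℂ) * f x) :=
    (Complex.continuous_ofReal.comp (continuous_mono a)).mul f.continuous
  exact (hcont.comp (continuous_T u)).aestronglyMeasurable

end St3

theorem statement3' (n : ℕ) (γ : MIdx n) (hγ : γ ≠ 0) :
    ∃ (s : Finset (MIdx n × MIdx n)) (c : MIdx n × MIdx n → ℝ),
      (∀ p ∈ s, hd p.1 + hd p.2 = hd γ ∧ 0 < hd p.1 ∧ hd p.1 < hd γ) ∧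
      ∀ (f g : SchwartzMap (H n) ℂ) (u : H n),
        (mono γ u : ℂ) * conv1 (⇑f) (⇑g) u
          = conv1 (fun w => (mono γ w : ℂ) * f w) (⇑g) u
            + conv1 (⇑f) (fun w => (mono γ w : ℂ) * g w) u
            + ∑ p ∈ s, (c p : ℂ) *
                conv1 (fun w => (mono p.1 w : ℂ) * f w)
                  (fun w => (mono p.2 w : ℂ) * g w) u := by
  classical
  obtain ⟨s, c, hs, hkey⟩ := St3.key γ hγ
  refine ⟨s, c, hs, ?_⟩
  intro f g u
  unfold conv1
  -- Abbreviation
  set T : H n → H n := fun v => hmul u (hinv v) with hT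
  -- pointwise identity
  have hpt : ∀ v : H n,
      (mono γ u : ℂ) * (f (T v) * g v)
        = ((mono γ (T v) : ℂ) * f (T v)) * g v
          + f (T v) * ((mono γ v : ℂ) * g v)
          + ∑ p ∈ s, (c p : ℂ) *
              (((mono p.1 (T v) : ℂ) * f (T v)) * ((mono p.2 v : ℂ) * g v)) := by
    intro v
    have hu : mono γ u = mono γ (T v) + mono γ v
        + ∑ p ∈ s, c p * mono p.1 (T v) * mono p.2 v := by
      have h1 := hkey (T v) v
      rw [hT] at h1 ⊢
      rw [St3.hmul_hinv_cancel u v] at h1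
      exact h1
    have hc : (mono γ u : ℂ) = (mono γ (T v) : ℂ) + (mono γ v : ℂ)
        + ∑ p ∈ s, (c p : ℂ) * (mono p.1 (T v) : ℂ) * (mono p.2 v : ℂ) := by
      rw [hu]
      push_cast
      ring
    rw [hc, add_mul, add_mul, Finset.sum_mul]
    have hterm : ∀ p ∈ s,
        (c p : ℂ) * (mono p.1 (T v) : ℂ) * (mono p.2 v : ℂ) * (f (T v) * g v)
          = (c p : ℂ) * (((mono p.1 (T v) : ℂ) * f (T v)) * ((mono p.2 v : ℂ) * g v)) := by
      intro p _
      ring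
    rw [Finset.sum_congr rfl hterm]
    ring
  -- integrability
  have hint : ∀ a b : MIdx n, Integrable (fun v : H n =>
      ((mono a (T v) : ℂ) * f (T v)) * ((mono b v : ℂ) * g v)) :=
    fun a b => St3.integrable_term a b f g u
  -- rewrite LHS
  rw [← integral_const_mul]
  -- rewrite the sum of convolutions
  have hsum : ∑ p ∈ s, (c p : ℂ) *
        ∫ v, ((mono p.1 (T v) : ℂ) * f (T v)) * ((mono p.2 v : ℂ) * g v)
      = ∫ v, ∑ p ∈ s, (c p : ℂ) *
          (((mono p.1 (T v) : ℂ) * f (T v)) * ((mono p.2 v : ℂ) * g v)) := by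
    rw [integral_finset_sum _ (fun p _ => (hint p.1 p.2).const_mul _)]
    exact Finset.sum_congr rfl fun p _ => (integral_const_mul _ _).symm
  show (∫ v, (mono γ u : ℂ) * (f (T v) * g v))
      = (∫ v, ((mono γ (T v) : ℂ) * f (T v)) * g v)
        + (∫ v, f (T v) * ((mono γ v : ℂ) * g v))
        + ∑ p ∈ s, (c p : ℂ) *
            ∫ v, ((mono p.1 (T v) : ℂ) * f (T v)) * ((mono p.2 v : ℂ) * g v)
  rw [hsum]
  have hintA : Integrable (fun v : H n => ((mono γ (T v) : ℂ) * f (T v)) * g v) := by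
    have := hint γ 0
    simpa [St3.mono_zero_idx] using this
  have hintB : Integrable (fun v : H n => f (T v) * ((mono γ v : ℂ) * g v)) := by
    have := hint 0 γ
    simpa [St3.mono_zero_idx] using this
  have hintS : Integrable (fun v : H n => ∑ p ∈ s, (c p : ℂ) *
      (((mono p.1 (T v) : ℂ) * f (T v)) * ((mono p.2 v : ℂ) * g v))) :=
    integrable_finset_sum _ (fun p _ => (hint p.1 p.2).const_mul _)
  have h1 : (∫ v, (mono γ u : ℂ) * (f (T v) * g v))
      = ∫ v, (((mono γ (T v) : ℂ) * f (T v)) * g v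
          + f (T v) * ((mono γ v : ℂ) * g v)
          + ∑ p ∈ s, (c p : ℂ) *
              (((mono p.1 (T v) : ℂ) * f (T v)) * ((mono p.2 v : ℂ) * g v))) :=
    integral_congr_ae (Filter.Eventually.of_forall fun v => hpt v)
  have h2 : (∫ v, (((mono γ (T v) : ℂ) * f (T v)) * g v
          + f (T v) * ((mono γ v : ℂ) * g v)
          + ∑ p ∈ s, (c p : ℂ) *
              (((mono p.1 (T v) : ℂ) * f (T v)) * ((mono p.2 v : ℂ) * g v))))
      = (∫ v, (((mono γ (T v) : ℂ) * f (T v)) * g v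
          + f (T v) * ((mono γ v : ℂ) * g v)))
        + ∫ v, (∑ p ∈ s, (c p : ℂ) *
              (((mono p.1 (T v) : ℂ) * f (T v)) * ((mono p.2 v : ℂ) * g v))) :=
    integral_add (hintA.add hintB) hintS
  have h3 : (∫ v, (((mono γ (T v) : ℂ) * f (T v)) * g v
          + f (T v) * ((mono γ v : ℂ) * g v)))
      = (∫ v, ((mono γ (T v) : ℂ) * f (T v)) * g v)
        + ∫ v, f (T v) * ((mono γ v : ℂ) * g v) :=
    integral_add hintA hintB
  rw [h1, h2, h3]


/-- For every multiindex `γ ≠ 0` there are constants `c_{αβ}` (supported on pairs with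
`d(α)+d(β) = d(γ)`, `0 < d(α) < d(γ)`) such that for all Schwartz `f, g`,
`T^γ(f *₁ g) = T^γf *₁ g + f *₁ T^γg + Σ c_{αβ} T^αf *₁ T^βg`. -/
theorem statement3 (n : ℕ) (γ : MIdx n) (hγ : γ ≠ 0) :
    ∃ (s : Finset (MIdx n × MIdx n)) (c : MIdx n × MIdx n → ℝ),
      (∀ p ∈ s, hd p.1 + hd p.2 = hd γ ∧ 0 < hd p.1 ∧ hd p.1 < hd γ) ∧
      ∀ (f g : SchwartzMap (H n) ℂ) (u : H n),
        (mono γ u : ℂ) * conv1 (⇑f) (⇑g) u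
          = conv1 (fun w => (mono γ w : ℂ) * f w) (⇑g) u
            + conv1 (⇑f) (fun w => (mono γ w : ℂ) * g w) u
            + ∑ p ∈ s, (c p : ℂ) *
                conv1 (fun w => (mono p.1 w : ℂ) * f w)
                  (fun w => (mono p.2 w : ℂ) * g w) u :=
  statement3' n γ hγ
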